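/- One has 𝐜₁ = (0,0,−a_ε·coth ξ₁) and 𝐜₂ = (0,0,a_ε·coth ξ₂), and for every integer m ≥ 0: (R₁∘R₂)^m(𝐜₁) = (0,0,−a_ε·coth(m·s₀+ξ₁)), (R₂∘R₁)^m(𝐜₂) = (0,0,a_ε·coth(m·s₀+ξ₂)), (R₂∘R₁)^m(R₂(𝐜₁)) = (0,0,a_ε·coth((m+1)·s₀)), and (R₁∘R₂)^m(R₁(𝐜₂)) = (0,0,−a_ε·coth((m+1)·s₀)). -/

import Mathlib

open Real

noncomputable section

abbrev E3 := EuclideanSpace ℝ (Fin 3)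

def pt (a b c : ℝ) : E3 := WithLp.toLp 2 ![a, b, c]

/-- Inversion (reflection) across the sphere of center `c` and radius `r`. -/
def sphRefl (c : E3) (r : ℝ) (x : E3) : E3 :=
  (r ^ 2 / ‖x - c‖ ^ 2) • (x - c) + c

/-- The hyperbolic cotangent. -/
def coth (x : ℝ) : ℝ := Real.cosh x / Real.sinh x

lemma pt_sub (a b : ℝ) : pt 0 0 a - pt 0 0 b = pt 0 0 (a - b) := by
  ext i; fin_cases i <;> simp [pt]

lemma pt_smul (t a : ℝ) : t • pt 0 0 a = pt 0 0 (t * a) := by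
  ext i; fin_cases i <;> simp [pt]

lemma pt_add (a b : ℝ) : pt 0 0 a + pt 0 0 b = pt 0 0 (a + b) := by
  ext i; fin_cases i <;> simp [pt]

lemma pt_norm_sq (a : ℝ) : ‖pt 0 0 a‖^2 = a^2 := by
  rw [EuclideanSpace.norm_eq]
  simp [pt, Fin.sum_univ_three]
  rw [Real.sq_sqrt (by positivity)]

lemma sphRefl_axis (c r z : ℝ) (h : z ≠ c) :
    sphRefl (pt 0 0 c) r (pt 0 0 z) = pt 0 0 (r^2 / (z - c) + c) := by
  unfold sphRefl
  rw [pt_sub, pt_norm_sq, pt_smul, pt_add]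
  have hz : z - c ≠ 0 := sub_ne_zero.2 h
  rw [pow_two (z - c), ← div_div, div_mul_cancel₀ _ hz]

lemma coth_pos {u : ℝ} (hu : 0 < u) : 0 < coth u :=
  div_pos (Real.cosh_pos u) (Real.sinh_pos_iff.2 hu)

lemma coth_step (a u ξ : ℝ) (ha : 0 < a) (hu : 0 < u) (hξ : 0 < ξ) :
    (a / Real.sinh ξ)^2 / (-(a * coth u) - a * coth ξ) + a * coth ξ = a * coth (u + ξ) := by
  have hsu : Real.sinh u ≠ 0 := ne_of_gt (Real.sinh_pos_iff.2 hu)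
  have hsξ : Real.sinh ξ ≠ 0 := ne_of_gt (Real.sinh_pos_iff.2 hξ)
  have hsuξ : Real.sinh (u + ξ) ≠ 0 := ne_of_gt (Real.sinh_pos_iff.2 (by linarith))
  have ha' : a ≠ 0 := ne_of_gt ha
  unfold coth
  have e1 : -(a * (Real.cosh u / Real.sinh u)) - a * (Real.cosh ξ / Real.sinh ξ)
      = (-(a * Real.sinh (u+ξ))) / (Real.sinh u * Real.sinh ξ) := by
    rw [Real.sinh_add]; field_simp; ring
  rw [e1]
  have e2 : (a / Real.sinh ξ)^2 / ((-(a * Real.sinh (u+ξ))) / (Real.sinh u * Real.sinh ξ))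
      = -(a * Real.sinh u)/(Real.sinh ξ * Real.sinh (u+ξ)) := by
    field_simp
  rw [e2]
  field_simp
  rw [Real.sinh_add, Real.cosh_add]
  ring_nf
  linear_combination (Real.sinh u) * Real.cosh_sq ξ

set_option maxHeartbeats 1000000 in
theorem stmt1 (r₁ r₂ ε : ℝ) (hr₁ : 0 < r₁) (hr₂ : 0 < r₂) (hε : 0 < ε)
    (aε c₁ c₂ ξ₁ ξ₂ s₀ : ℝ)
    (haε : aε = Real.sqrt ε * Real.sqrt ((2*r₁+ε)*(2*r₂+ε)*(2*r₁+2*r₂+ε)) / (2*(r₁+r₂+ε)))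
    (hc₁ : c₁ = (r₂^2 - r₁^2 - (r₁+r₂+ε)^2) / (2*(r₁+r₂+ε)))
    (hc₂ : c₂ = c₁ + r₁ + r₂ + ε)
    (hξ₁ : ξ₁ = Real.arsinh (aε / r₁)) (hξ₂ : ξ₂ = Real.arsinh (aε / r₂))
    (hs₀ : s₀ = ξ₁ + ξ₂)
    (R₁ R₂ : E3 → E3)
    (hR₁ : R₁ = sphRefl (pt 0 0 c₁) r₁) (hR₂ : R₂ = sphRefl (pt 0 0 c₂) r₂) :
    pt 0 0 c₁ = pt 0 0 (-(aε * coth ξ₁)) ∧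
    pt 0 0 c₂ = pt 0 0 (aε * coth ξ₂) ∧
    ∀ m : ℕ,
      (R₁ ∘ R₂)^[m] (pt 0 0 c₁) = pt 0 0 (-(aε * coth (m * s₀ + ξ₁))) ∧
      (R₂ ∘ R₁)^[m] (pt 0 0 c₂) = pt 0 0 (aε * coth (m * s₀ + ξ₂)) ∧
      (R₂ ∘ R₁)^[m] (R₂ (pt 0 0 c₁)) = pt 0 0 (aε * coth ((m + 1) * s₀)) ∧
      (R₁ ∘ R₂)^[m] (R₁ (pt 0 0 c₂)) = pt 0 0 (-(aε * coth ((m + 1) * s₀))) := by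
  have hd : (0:ℝ) < r₁ + r₂ + ε := by linarith
  have hP : (0:ℝ) < (2*r₁+ε)*(2*r₂+ε)*(2*r₁+2*r₂+ε) := by positivity
  have haεpos : 0 < aε := by
    rw [haε]
    have h1 : 0 < Real.sqrt ε := Real.sqrt_pos.2 hε
    have h2 : 0 < Real.sqrt ((2*r₁+ε)*(2*r₂+ε)*(2*r₁+2*r₂+ε)) := Real.sqrt_pos.2 hP
    positivity
  have haε2 : aε^2 = ε * ((2*r₁+ε)*(2*r₂+ε)*(2*r₁+2*r₂+ε)) / (2*(r₁+r₂+ε))^2 := by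
    rw [haε, div_pow, mul_pow, Real.sq_sqrt hε.le, Real.sq_sqrt hP.le]
  have hc1sq : c₁^2 = r₁^2 + aε^2 := by
    rw [hc₁, haε2]; field_simp; ring
  have hc1neg : c₁ < 0 := by
    rw [hc₁]
    apply div_neg_of_neg_of_pos _ (by linarith)
    nlinarith
  have hc2sq : c₂^2 = r₂^2 + aε^2 := by
    rw [hc₂, hc₁, haε2]; field_simp; ring
  have hc2pos : 0 < c₂ := by
    have he : c₂ = (r₂^2 - r₁^2 + (r₁+r₂+ε)^2) / (2*(r₁+r₂+ε)) := by
      rw [hc₂, hc₁]; field_simp; ring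
    rw [he]
    apply div_pos _ (by linarith)
    nlinarith [mul_pos (show (0:ℝ) < r₂ + ε by linarith) (show (0:ℝ) < 2*r₁ + r₂ + ε by linarith)]
  have hξ₁pos : 0 < ξ₁ := by
    rw [hξ₁, ← Real.arsinh_zero]
    exact Real.arsinh_lt_arsinh.2 (by positivity)
  have hξ₂pos : 0 < ξ₂ := by
    rw [hξ₂, ← Real.arsinh_zero]
    exact Real.arsinh_lt_arsinh.2 (by positivity)
  have hs₀pos : 0 < s₀ := by rw [hs₀]; linarith
  have hsinh₁ : Real.sinh ξ₁ = aε / r₁ := by rw [hξ₁, Real.sinh_arsinh]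
  have hsinh₂ : Real.sinh ξ₂ = aε / r₂ := by rw [hξ₂, Real.sinh_arsinh]
  have hr₁eq : r₁ = aε / Real.sinh ξ₁ := by
    rw [hsinh₁]; field_simp
  have hr₂eq : r₂ = aε / Real.sinh ξ₂ := by
    rw [hsinh₂]; field_simp
  -- the two center identities
  have hcoth₁ : aε * coth ξ₁ = -c₁ := by
    have hcosh : Real.cosh ξ₁ = -c₁ / r₁ := by
      rw [hξ₁, Real.cosh_arsinh]
      rw [show 1 + (aε/r₁)^2 = (-c₁/r₁)^2 by
        field_simp; linarith [hc1sq]]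
      exact Real.sqrt_sq (div_nonneg (by linarith) hr₁.le)
    unfold coth
    rw [hcosh, hsinh₁]
    field_simp
  have hcoth₂ : aε * coth ξ₂ = c₂ := by
    have hcosh : Real.cosh ξ₂ = c₂ / r₂ := by
      rw [hξ₂, Real.cosh_arsinh]
      rw [show 1 + (aε/r₂)^2 = (c₂/r₂)^2 by
        field_simp; linarith [hc2sq]]
      exact Real.sqrt_sq (by positivity)
    unfold coth
    rw [hcosh, hsinh₂]
    field_simp
  -- the two reflection step lemmas
  have step2 : ∀ u : ℝ, 0 < u → R₂ (pt 0 0 (-(aε * coth u))) = pt 0 0 (aε * coth (u + ξ₂)) := by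
    intro u hu
    have hz : -(aε * coth u) ≠ c₂ := by
      have h1 : 0 < aε * coth u := mul_pos haεpos (coth_pos hu)
      exact ne_of_lt (by linarith)
    rw [hR₂, sphRefl_axis _ _ _ hz]
    have key := coth_step aε u ξ₂ haεpos hu hξ₂pos
    rw [← hr₂eq] at key
    refine congrArg (pt 0 0) ?_
    rw [← hcoth₂]
    exact key
  have step1 : ∀ u : ℝ, 0 < u → R₁ (pt 0 0 (aε * coth u)) = pt 0 0 (-(aε * coth (u + ξ₁))) := by
    intro u hu
    have hz : aε * coth u ≠ c₁ := by
      have h1 : 0 < aε * coth u := mul_pos haεpos (coth_pos hu)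
      exact ne_of_gt (by linarith)
    rw [hR₁, sphRefl_axis _ _ _ hz]
    have key := coth_step aε u ξ₁ haεpos hu hξ₁pos
    rw [← hr₁eq] at key
    rw [show -(aε * coth u) - aε * coth ξ₁ = -(aε * coth u + aε * coth ξ₁) by ring, div_neg] at key
    have hc₁' : c₁ = -(aε * coth ξ₁) := by linarith [hcoth₁]
    refine congrArg (pt 0 0) ?_
    rw [hc₁', show aε * coth u - -(aε * coth ξ₁) = aε * coth u + aε * coth ξ₁ by ring]
    linarith [key]
  refine ⟨by rw [show -(aε * coth ξ₁) = c₁ by linarith [hcoth₁]],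
          by rw [hcoth₂], ?_⟩
  intro m
  induction m with
  | zero =>
    have hz1 : -(aε * coth ξ₁) = c₁ := by linarith [hcoth₁]
    refine ⟨?_, ?_, ?_, ?_⟩
    · simp only [Function.iterate_zero, id_eq, Nat.cast_zero, zero_mul, zero_add]
      rw [hz1]
    · simp only [Function.iterate_zero, id_eq, Nat.cast_zero, zero_mul, zero_add]
      rw [hcoth₂]
    · simp only [Function.iterate_zero, id_eq, Nat.cast_zero]
      rw [show ((0:ℝ) + 1) * s₀ = ξ₁ + ξ₂ by rw [hs₀]; ring, ← hz1]
      exact step2 ξ₁ hξ₁pos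
    · simp only [Function.iterate_zero, id_eq, Nat.cast_zero]
      rw [show ((0:ℝ) + 1) * s₀ = ξ₂ + ξ₁ by rw [hs₀]; ring, ← hcoth₂]
      exact step1 ξ₂ hξ₂pos
  | succ n ih =>
    obtain ⟨ih1, ih2, ih3, ih4⟩ := ih
    have hmnn : (0:ℝ) ≤ (n : ℝ) := Nat.cast_nonneg n
    have hns : 0 ≤ (n:ℝ) * s₀ := mul_nonneg hmnn hs₀pos.le
    have h1pos : 0 < (n:ℝ) * s₀ + ξ₁ := by linarith
    have h2pos : 0 < (n:ℝ) * s₀ + ξ₂ := by linarith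
    have h3pos : 0 < ((n:ℝ) + 1) * s₀ := mul_pos (by linarith) hs₀pos
    refine ⟨?_, ?_, ?_, ?_⟩
    · rw [Function.iterate_succ_apply', ih1, Function.comp_apply,
        step2 _ h1pos, step1 _ (by linarith : (0:ℝ) < (n:ℝ) * s₀ + ξ₁ + ξ₂)]
      refine congrArg (pt 0 0) ?_
      rw [show ((n + 1 : ℕ) : ℝ) * s₀ + ξ₁ = (n:ℝ) * s₀ + ξ₁ + ξ₂ + ξ₁ by push_cast; rw [hs₀]; ring]
    · rw [Function.iterate_succ_apply', ih2, Function.comp_apply,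
        step1 _ h2pos, step2 _ (by linarith : (0:ℝ) < (n:ℝ) * s₀ + ξ₂ + ξ₁)]
      refine congrArg (pt 0 0) ?_
      rw [show ((n + 1 : ℕ) : ℝ) * s₀ + ξ₂ = (n:ℝ) * s₀ + ξ₂ + ξ₁ + ξ₂ by push_cast; rw [hs₀]; ring]
    · rw [Function.iterate_succ_apply', ih3, Function.comp_apply,
        step1 _ h3pos, step2 _ (by linarith [h3pos] : (0:ℝ) < ((n:ℝ) + 1) * s₀ + ξ₁)]
      refine congrArg (pt 0 0) ?_
      rw [show (((n + 1 : ℕ) : ℝ) + 1) * s₀ = ((n:ℝ) + 1) * s₀ + ξ₁ + ξ₂ by push_cast; rw [hs₀]; ring]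
    · rw [Function.iterate_succ_apply', ih4, Function.comp_apply,
        step2 _ h3pos, step1 _ (by linarith [h3pos] : (0:ℝ) < ((n:ℝ) + 1) * s₀ + ξ₂)]
      refine congrArg (pt 0 0) ?_
      rw [show (((n + 1 : ℕ) : ℝ) + 1) * s₀ = ((n:ℝ) + 1) * s₀ + ξ₂ + ξ₁ by push_cast; rw [hs₀]; ring]

end
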